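/- There exist a set Γ of cardinality 𝔟 and a compact subset K of the cube [0,1]^Γ which is homeomorphic to the Cantor cube {0,1}^ℕ, such that for every countable decomposition Γ = ⋃_{n∈ℕ} Γ_n there exists some n ∈ ℕ for which the pseudometric d_{Γ_n} does not fragment K. -/

import Mathlib

open Set Topology Cardinal

/-- A map `f : X × X → ℝ` fragments the topological space `X` if for every nonempty
subset `L` of `X` and every `ε > 0` there is a nonempty relatively open subset of `L`
of `f`-diameter less than `ε`. -/
def Fragments {X : Type*} [TopologicalSpace X] (f : X → X → ℝ) : Prop :=
  ∀ L : Set X, L.Nonempty → ∀ ε : ℝ, 0 < ε →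
    ∃ V : Set X, IsOpen V ∧ (V ∩ L).Nonempty ∧
      ∀ x ∈ V ∩ L, ∀ y ∈ V ∩ L, f x y < ε

/-- `f` (defined on the ambient space `X`) fragments the subset `K`. -/
def FragmentsOn {X : Type*} [TopologicalSpace X] (f : X → X → ℝ) (K : Set X) : Prop :=
  ∀ L : Set X, L ⊆ K → L.Nonempty → ∀ ε : ℝ, 0 < ε →
    ∃ V : Set X, IsOpen V ∧ (V ∩ L).Nonempty ∧
      ∀ x ∈ V ∩ L, ∀ y ∈ V ∩ L, f x y < ε

/-- A quasi metric: nonnegative, symmetric, and vanishing exactly on the diagonal. -/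
def IsQuasiMetric {X : Type*} (f : X → X → ℝ) : Prop :=
  (∀ x y, 0 ≤ f x y) ∧ (∀ x y, f x y = f y x) ∧ (∀ x y, f x y = 0 ↔ x = y)

/-- A metric (as a two-variable real function): symmetric, vanishing exactly on the
diagonal, and satisfying the triangle inequality. -/
def IsMetricFun {X : Type*} (d : X → X → ℝ) : Prop :=
  (∀ x y, d x y = d y x) ∧ (∀ x y, d x y = 0 ↔ x = y) ∧
    (∀ x y z, d x z ≤ d x y + d y z)

/-- Lower semicontinuity of a two-variable map for the product topology. -/
def LSC {X : Type*} [TopologicalSpace X] (f : X → X → ℝ) : Prop :=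
  LowerSemicontinuous (fun p : X × X => f p.1 p.2)

/-- A subset of `ℕ → ℕ` is σ-bounded (for the pointwise order) if it is a countable
union of order-bounded sets. -/
def SigmaBounded (S : Set (ℕ → ℕ)) : Prop :=
  ∃ B : ℕ → Set (ℕ → ℕ), S ⊆ (⋃ n, B n) ∧ ∀ n, ∃ τ : ℕ → ℕ, ∀ σ ∈ B n, σ ≤ τ

/-- The cardinal `𝔟`: the least cardinality of a subset of `ℕ → ℕ` which is not
σ-bounded for the pointwise order. -/
noncomputable def cardinalB : Cardinal :=
  sInf { c | ∃ S : Set (ℕ → ℕ), ¬ SigmaBounded S ∧ #S = c }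

/-- The pseudometric `d_A` on `[0,1]^Γ` given by `d_A(x,y) = sup_{γ ∈ A} |x_γ - y_γ|`. -/
noncomputable def dGamma {Γ : Type*} (A : Set Γ) (x y : Γ → ℝ) : ℝ :=
  ⨆ γ : A, |x γ - y γ|

/-- There exist a set `Γ` of cardinality `𝔟` and a compact `K ⊆ [0,1]^Γ` homeomorphic to the
Cantor cube `{0,1}^ℕ` such that for every countable decomposition `Γ = ⋃_n Γ_n` some
`d_{Γ_n}` does not fragment `K`. -/
noncomputable def digitSum (a : ℕ → Bool) : ℝ :=
  ∑' i, (if a i then (1:ℝ) else 0) * ((1/2) * (1/3)^i)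

lemma term_abs_le (a : ℕ → Bool) (i : ℕ) :
    |(if a i then (1:ℝ) else 0) * ((1/2) * (1/3)^i)| ≤ (1/2) * (1/3)^i := by
  rcases a i with _ | _ <;> simp

lemma geom_summable : Summable (fun i : ℕ => (1/2 : ℝ) * (1/3)^i) :=
  (summable_geometric_of_lt_one (by norm_num) (by norm_num)).mul_left _

lemma digitSum_summable (a : ℕ → Bool) :
    Summable (fun i => (if a i then (1:ℝ) else 0) * ((1/2) * (1/3)^i)) := by
  apply Summable.of_abs
  apply Summable.of_nonneg_of_le (fun i => abs_nonneg _) (term_abs_le a) geom_summable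

lemma geom_tsum : ∑' i : ℕ, (1/2 : ℝ) * (1/3)^i = 3/4 := by
  rw [tsum_mul_left, tsum_geometric_of_lt_one (by norm_num) (by norm_num)]
  norm_num

lemma digitSum_nonneg (a : ℕ → Bool) : 0 ≤ digitSum a := by
  apply tsum_nonneg
  intro i; rcases a i with _ | _ <;> simp

lemma digitSum_le (a : ℕ → Bool) : digitSum a ≤ 3/4 := by
  rw [← geom_tsum]
  apply Summable.tsum_le_tsum _ (digitSum_summable a) geom_summable
  intro i
  calc (if a i then (1:ℝ) else 0) * ((1/2) * (1/3)^i) ≤ |(if a i then (1:ℝ) else 0) * ((1/2) * (1/3)^i)| := le_abs_self _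
    _ ≤ _ := term_abs_le a i

lemma digitSum_continuous : Continuous digitSum := by
  apply continuous_tsum (u := fun i : ℕ => (1/2 : ℝ) * (1/3)^i)
  · intro i
    exact (continuous_of_discreteTopology
      (f := fun b : Bool => (if b then (1:ℝ) else 0) * ((1/2) * (1/3)^i))).comp (continuous_apply i)
  · exact geom_summable
  · intro i a
    exact term_abs_le a i

noncomputable def tTerm (c : ℕ → Bool) (i : ℕ) : ℝ :=
  (if c i then (1:ℝ) else 0) * ((1/2) * (1/3)^i)

lemma digitSum_eq (a : ℕ → Bool) : digitSum a = ∑' i, tTerm a i := rfl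

lemma tTerm_eq_zero (c : ℕ → Bool) (i : ℕ) (h : c i = false) : tTerm c i = 0 := by
  simp [tTerm, h]
lemma tTerm_eq_w (c : ℕ → Bool) (i : ℕ) (h : c i = true) : tTerm c i = (1/2) * (1/3)^i := by
  simp [tTerm, h]

lemma tTerm_summable (a : ℕ → Bool) : Summable (tTerm a) := digitSum_summable a

lemma gbound (a b : ℕ → Bool) (j : ℕ) :
    |tTerm a j - tTerm b j| ≤ (1/2) * (1/3)^j := by
  have hw : (0:ℝ) ≤ (1/2) * (1/3)^j := by positivity
  rcases ha : a j <;> rcases hb : b j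
  · rw [tTerm_eq_zero _ _ ha, tTerm_eq_zero _ _ hb, sub_self, abs_zero]; exact hw
  · rw [tTerm_eq_zero _ _ ha, tTerm_eq_w _ _ hb, zero_sub, abs_neg, abs_of_nonneg hw]
  · rw [tTerm_eq_w _ _ ha, tTerm_eq_zero _ _ hb, sub_zero, abs_of_nonneg hw]
  · rw [tTerm_eq_w _ _ ha, tTerm_eq_w _ _ hb, sub_self, abs_zero]; exact hw

set_option maxHeartbeats 1000000 in
lemma digitSum_sep (a b : ℕ → Bool) (n : ℕ) (hlt : ∀ i < n, a i = b i) (hne : a n ≠ b n) :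
    (1/4) * (1/3)^n ≤ |digitSum a - digitSum b| := by
  classical
  have hga : Summable (tTerm a) := tTerm_summable a
  have hgb : Summable (tTerm b) := tTerm_summable b
  have hg : Summable (fun i => tTerm a i - tTerm b i) := hga.sub hgb
  have h1 : digitSum a - digitSum b = ∑' i, (tTerm a i - tTerm b i) := by
    rw [digitSum_eq, digitSum_eq, Summable.tsum_sub hga hgb]
  have h2 : ∑ i ∈ Finset.range (n+1), (tTerm a i - tTerm b i)
      + ∑' i, (tTerm a (i+(n+1)) - tTerm b (i+(n+1)))
      = ∑' i, (tTerm a i - tTerm b i) :=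
    Summable.sum_add_tsum_nat_add (n+1) hg
  have h3 : ∑ i ∈ Finset.range (n+1), (tTerm a i - tTerm b i) = tTerm a n - tTerm b n := by
    apply Finset.sum_eq_single_of_mem n (Finset.self_mem_range_succ n)
    intro i hi hin
    have hib : a i = b i :=
      hlt i (lt_of_le_of_ne (Nat.lt_succ_iff.mp (Finset.mem_range.mp hi)) hin)
    simp [tTerm, hib]
  have hw : (0:ℝ) ≤ (1/2) * (1/3)^n := by positivity
  have habs : |tTerm a n - tTerm b n| = (1/2) * (1/3)^n := by
    rcases ha : a n <;> rcases hb : b n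
    · exact absurd (ha.trans hb.symm) hne
    · rw [tTerm_eq_zero _ _ ha, tTerm_eq_w _ _ hb, zero_sub, abs_neg]
      exact abs_of_nonneg hw
    · rw [tTerm_eq_w _ _ ha, tTerm_eq_zero _ _ hb, sub_zero]
      exact abs_of_nonneg hw
    · exact absurd (ha.trans hb.symm) hne
  set T : ℝ := ∑' i, (tTerm a (i+(n+1)) - tTerm b (i+(n+1))) with hT
  have hs : Summable (fun i => (tTerm a (i+(n+1)) - tTerm b (i+(n+1)))) := by
    have h := (summable_nat_add_iff (f := fun i => tTerm a i - tTerm b i) (n+1)).2 hg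
    exact h
  have hsabs : Summable (fun i => |tTerm a (i+(n+1)) - tTerm b (i+(n+1))|) := hs.abs
  have htail : |T| ≤ (1/4) * (1/3)^n := by
    have hb2 : ∀ i, |tTerm a (i+(n+1)) - tTerm b (i+(n+1))| ≤ (1/2) * (1/3)^(i+(n+1)) :=
      fun i => gbound a b _
    have hsum2 : Summable (fun i : ℕ => (1/2:ℝ) * (1/3)^(i+(n+1))) := by
      have h := (summable_nat_add_iff (f := fun i : ℕ => (1/2:ℝ) * (1/3)^i) (n+1)).2 geom_summable
      exact h
    have step1 : |T| ≤ ∑' i, |tTerm a (i+(n+1)) - tTerm b (i+(n+1))| := by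
      have := norm_tsum_le_tsum_norm
        (f := fun i => tTerm a (i+(n+1)) - tTerm b (i+(n+1)))
        (by simpa [Real.norm_eq_abs] using hsabs)
      simpa [Real.norm_eq_abs] using this
    have step2 : ∑' i, |tTerm a (i+(n+1)) - tTerm b (i+(n+1))|
        ≤ ∑' i, (1/2:ℝ)*(1/3)^(i+(n+1)) := Summable.tsum_le_tsum hb2 hsabs hsum2
    have step3 : ∑' i, (1/2:ℝ)*(1/3)^(i+(n+1)) = (1/4) * (1/3)^n := by
      have hc : ∀ i:ℕ, (1/2:ℝ)*(1/3)^(i+(n+1)) = ((1/2)*(1/3)^(n+1)) * (1/3)^i := by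
        intro i; rw [pow_add]; ring
      rw [tsum_congr hc, tsum_mul_left, tsum_geometric_of_lt_one (by norm_num) (by norm_num),
        pow_succ]
      ring
    linarith
  have key : |tTerm a n - tTerm b n| - |T| ≤ |digitSum a - digitSum b| := by
    have hsum : digitSum a - digitSum b = (tTerm a n - tTerm b n) + T := by
      rw [h1, ← h2, h3]
    have := abs_add_le ((tTerm a n - tTerm b n) + T) (-T)
    simp only [abs_neg, add_neg_cancel_right] at this
    rw [hsum]
    linarith
  rw [habs] at key
  linarith

lemma digitSum_injective : Function.Injective digitSum := by
  intro a b hab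
  by_contra hne
  have hex : ∃ n, a n ≠ b n := by
    by_contra h; push_neg at h; exact hne (funext h)
  have h1 : a (Nat.find hex) ≠ b (Nat.find hex) := Nat.find_spec hex
  have h2 : ∀ i < Nat.find hex, a i = b i := fun i hi => not_not.mp (Nat.find_min hex hi)
  have := digitSum_sep a b (Nat.find hex) h2 h1
  rw [hab, sub_self, abs_zero] at this
  nlinarith [pow_pos (by norm_num : (0:ℝ) < 1/3) (Nat.find hex)]

def Dz (z : ℕ → Bool) (σ : ℕ → ℕ) : ℕ → Bool := fun i =>
  if i % 2 = 0 then z (i / 2) else z (Nat.pair (i / 2) (σ (i / 2)))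

lemma Dz_even (z : ℕ → Bool) (σ : ℕ → ℕ) (j : ℕ) : Dz z σ (2*j) = z j := by
  have h1 : (2*j) % 2 = 0 := by omega
  have h2 : (2*j) / 2 = j := by omega
  simp [Dz, h1, h2]

lemma Dz_odd (z : ℕ → Bool) (σ : ℕ → ℕ) (j : ℕ) :
    Dz z σ (2*j+1) = z (Nat.pair j (σ j)) := by
  have h1 : (2*j+1) % 2 = 1 := by omega
  have h2 : (2*j+1) / 2 = j := by omega
  simp [Dz, h1, h2]

lemma Dz_continuous (σ : ℕ → ℕ) : Continuous (fun z => Dz z σ) := by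
  apply continuous_pi; intro i
  unfold Dz
  by_cases h : i % 2 = 0
  · simp only [h, if_true]; exact continuous_apply _
  · simp only [h, if_false]; exact continuous_apply _

lemma univ_not_sigmaBounded : ¬ SigmaBounded (Set.univ : Set (ℕ → ℕ)) := by
  rintro ⟨B, hcov, hbd⟩
  choose τ hτ using hbd
  have hmem : (fun n => τ n n + 1) ∈ ⋃ n, B n := hcov (Set.mem_univ _)
  rw [Set.mem_iUnion] at hmem
  obtain ⟨n, hn⟩ := hmem
  have := hτ n _ hn n
  simp at this

lemma exists_S : ∃ S : Set (ℕ → ℕ), ¬ SigmaBounded S ∧ #S = cardinalB := by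
  have hne : {c | ∃ S : Set (ℕ → ℕ), ¬ SigmaBounded S ∧ #S = c}.Nonempty :=
    ⟨_, ⟨Set.univ, univ_not_sigmaBounded, rfl⟩⟩
  exact csInf_mem hne

theorem statement7 :
    ∃ (Γ : Type) (K : Set (Γ → ℝ)),
      Cardinal.mk Γ = cardinalB ∧
      (∀ x ∈ K, ∀ γ, x γ ∈ Set.Icc (0 : ℝ) 1) ∧ IsCompact K ∧
      Nonempty (K ≃ₜ (ℕ → Bool)) ∧
      ∀ Γn : ℕ → Set Γ, (⋃ n, Γn n) = Set.univ →
        ∃ n, ¬ FragmentsOn (dGamma (Γn n)) K := by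
  obtain ⟨S, hSnb, hScard⟩ := exists_S
  have hSne : S.Nonempty := by
    by_contra h
    rw [Set.not_nonempty_iff_eq_empty] at h
    apply hSnb
    rw [h]
    exact ⟨fun _ => ∅, by simp, fun n => ⟨fun _ => 0, by simp⟩⟩
  obtain ⟨σ₀, hσ₀⟩ := hSne
  set φ : (ℕ → Bool) → (↥S → ℝ) := fun z γ => digitSum (Dz z γ.1) with hφ
  have hφcont : Continuous φ := by
    apply continuous_pi; intro γ
    exact digitSum_continuous.comp (Dz_continuous γ.1)
  have hφinj : Function.Injective φ := by
    intro z z' h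
    have hD : Dz z σ₀ = Dz z' σ₀ := digitSum_injective (congrFun h ⟨σ₀, hσ₀⟩)
    funext i
    have h2 := congrFun hD (2*i)
    rwa [Dz_even, Dz_even] at h2
  refine ⟨↥S, Set.range φ, hScard, ?_, isCompact_range hφcont, ?_, ?_⟩
  · rintro x ⟨z, rfl⟩ γ
    exact ⟨digitSum_nonneg _, le_trans (digitSum_le _) (by norm_num)⟩
  · let e : (ℕ → Bool) ≃ ↥(Set.range φ) := Equiv.ofInjective φ hφinj
    have hec : Continuous e := by
      apply continuous_induced_rng.mpr
      have : Subtype.val ∘ ⇑e = φ := by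
        funext z
        rfl
      rw [this]
      exact hφcont
    exact ⟨(hec.homeoOfEquivCompactToT2).symm⟩
  · intro Γn hcov
    have hpick : ∃ n : ℕ, ¬ ∃ τ : ℕ → ℕ, ∀ σ ∈ Subtype.val '' (Γn n), σ ≤ τ := by
      by_contra h
      push_neg at h
      apply hSnb
      refine ⟨fun n => Subtype.val '' (Γn n), ?_, h⟩
      intro σ hσ
      have hmem : (⟨σ, hσ⟩ : ↥S) ∈ ⋃ n, Γn n := hcov ▸ Set.mem_univ _
      rw [Set.mem_iUnion] at hmem
      obtain ⟨n, hn⟩ := hmem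
      exact Set.mem_iUnion.mpr ⟨n, ⟨⟨σ, hσ⟩, hn, rfl⟩⟩
    obtain ⟨n, hn⟩ := hpick
    refine ⟨n, ?_⟩
    have hk : ∃ k : ℕ, ∀ M : ℕ, ∃ σ ∈ Subtype.val '' (Γn n), M < σ k := by
      by_contra h
      push_neg at h
      choose M hM using h
      exact hn ⟨M, fun σ hσ k => hM k σ hσ⟩
    obtain ⟨k, hk⟩ := hk
    intro hfrag
    set Lk : Set (ℕ → Bool) := {z | ∀ k' j, k' ≠ k → z (Nat.pair k' j) = false} with hLk
    set L : Set (↥S → ℝ) := φ '' Lk with hL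
    have hLsub : L ⊆ Set.range φ := Set.image_subset_range φ Lk
    have hLne : L.Nonempty := ⟨φ (fun _ => false), ⟨fun _ => false, fun _ _ _ => rfl, rfl⟩⟩
    have hεpos : (0:ℝ) < (1/4) * (1/3)^(2*k+1) := by positivity
    obtain ⟨V, hVopen, hVL, hVsmall⟩ := hfrag L hLsub hLne _ hεpos
    obtain ⟨x, hxV, hxL⟩ := hVL
    obtain ⟨z, hzLk, rfl⟩ := hxL
    have hW : IsOpen (φ ⁻¹' V) := hVopen.preimage hφcont
    obtain ⟨I, u, hIu, hsub⟩ := isOpen_pi_iff.mp hW z hxV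
    set m : ℕ := (I.sup id) + 1 with hm
    obtain ⟨σ, hσmem, hσbig⟩ := hk (m + k)
    set n₀ : ℕ := Nat.pair k (σ k) with hn₀
    have hn₀big : m + k < n₀ := lt_of_lt_of_le hσbig (Nat.right_le_pair k (σ k))
    set z' : ℕ → Bool := Function.update z n₀ (!(z n₀)) with hz'
    have hz'Lk : z' ∈ Lk := by
      intro k' j hk'
      have hne2 : Nat.pair k' j ≠ n₀ := by
        intro h
        rw [hn₀, Nat.pair_eq_pair] at h
        exact hk' h.1
      rw [hz', Function.update_of_ne hne2]
      exact hzLk k' j hk'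
    have hz'W : z' ∈ φ ⁻¹' V := by
      apply hsub
      intro i hi
      have him : i < m := lt_of_le_of_lt (Finset.le_sup (f := id) hi) (Nat.lt_succ_self _)
      have hiz : z' i = z i := Function.update_of_ne (by omega) _ _
      rw [hiz]
      exact (hIu i hi).2
    have hxmem : φ z ∈ V ∩ L := ⟨hxV, ⟨z, hzLk, rfl⟩⟩
    have hymem : φ z' ∈ V ∩ L := ⟨hz'W, ⟨z', hz'Lk, rfl⟩⟩
    have hlt := hVsmall _ hxmem _ hymem
    obtain ⟨γσ, hγσΓn, hγσval⟩ := hσmem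
    have hagree : ∀ i < 2*k+1, Dz z σ i = Dz z' σ i := by
      intro i hi
      rcases Nat.even_or_odd i with ⟨j, hj⟩ | ⟨j, hj⟩
      · have hj2 : i = 2*j := by omega
        rw [hj2, Dz_even, Dz_even]
        exact (Function.update_of_ne (by omega : j ≠ n₀) _ _).symm
      · rw [hj, Dz_odd, Dz_odd]
        have hne3 : Nat.pair j (σ j) ≠ n₀ := by
          intro h
          rw [hn₀, Nat.pair_eq_pair] at h
          omega
        exact (Function.update_of_ne hne3 _ _).symm
    have hdiff : Dz z σ (2*k+1) ≠ Dz z' σ (2*k+1) := by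
      rw [Dz_odd, Dz_odd, ← hn₀, hz', Function.update_self]
      cases z n₀ <;> simp
    have hsep : (1/4) * (1/3)^(2*k+1) ≤ |φ z γσ - φ z' γσ| := by
      have : φ z γσ = digitSum (Dz z σ) := by rw [hφ]; simp [hγσval]
      have h2 : φ z' γσ = digitSum (Dz z' σ) := by rw [hφ]; simp [hγσval]
      rw [this, h2]
      exact digitSum_sep _ _ (2*k+1) hagree hdiff
    have hbdd : BddAbove (Set.range fun γ : ↥(Γn n) => |φ z γ.1 - φ z' γ.1|) := by
      refine ⟨2, ?_⟩
      rintro r ⟨γ, rfl⟩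
      have h1 : (0:ℝ) ≤ digitSum (Dz z γ.1.1) := digitSum_nonneg _
      have h2 : digitSum (Dz z γ.1.1) ≤ 3/4 := digitSum_le _
      have h3 : (0:ℝ) ≤ digitSum (Dz z' γ.1.1) := digitSum_nonneg _
      have h4 : digitSum (Dz z' γ.1.1) ≤ 3/4 := digitSum_le _
      rw [hφ]
      rw [abs_sub_le_iff]
      constructor <;> simp <;> linarith
    have hle : |φ z γσ - φ z' γσ| ≤ dGamma (Γn n) (φ z) (φ z') := by
      have hrfl : dGamma (Γn n) (φ z) (φ z') = ⨆ γ : ↥(Γn n), |φ z γ.1 - φ z' γ.1| := rfl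
      rw [hrfl]
      exact le_ciSup hbdd ⟨γσ, hγσΓn⟩
    linarith
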